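/- Assume a well-defined ADT in which every sort contains at least two constructor terms, and let C = σ¹ → f¹ → σ² → f² → ⋯ → fⁿ → σ¹ be a simple cycle in the dependency graph D such that C is the only path from σ¹ to itself (every cycle starting and ending in σ¹ is a repetition of C) and all constructors f¹, …, fⁿ on C are unary. Then the size image of σ¹ satisfies 𝕊_{σ¹} = ℕ·n + ⋃_{i=1}^{n} (𝕊^{fⁱ}_{σⁱ} + (i−1)). -/

import Mathlib

structure ADTSig where
  numSorts : ℕ
  numCtors : ℕ
  ctorArgs : Fin numCtors → List (Fin numSorts)
  ctorRes : Fin numCtors → Fin numSorts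

namespace ADTSig

inductive Term (S : ADTSig) : Fin S.numSorts → Type where
  | mk (f : Fin S.numCtors)
      (args : (i : Fin (S.ctorArgs f).length) → Term S ((S.ctorArgs f).get i)) :
      Term S (S.ctorRes f)

def Term.size {S : ADTSig} : {σ : Fin S.numSorts} → Term S σ → ℕ
  | _, .mk _ args => 1 + ∑ i, (args i).size

def Term.head {S : ADTSig} : {σ : Fin S.numSorts} → Term S σ → Fin S.numCtors
  | _, .mk f _ => f

def WellDefined (S : ADTSig) : Prop := ∀ σ, Nonempty (S.Term σ)

def ExpandingSort (S : ADTSig) (σ : Fin S.numSorts) : Prop :=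
  ∀ n : ℕ, ∃ b : ℕ, ∀ b' ≥ b,
    (∀ t : S.Term σ, t.size ≠ b') ∨ n ≤ Nat.card {t : S.Term σ // t.size = b'}

def ExpandingADT (S : ADTSig) : Prop := ∀ σ, ExpandingSort S σ

/-- The size image `𝕊_σ`. -/
def SizeImage (S : ADTSig) (σ : Fin S.numSorts) : Set ℕ :=
  {b | ∃ t : S.Term σ, t.size = b}

/-- The relativised size image `𝕊^f_σ`: sizes of terms not starting with `f`. -/
def RelSizeImage (S : ADTSig) (σ : Fin S.numSorts) (f : Fin S.numCtors) : Set ℕ :=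
  {b | ∃ t : S.Term σ, t.head ≠ f ∧ t.size = b}

/-- Vertices of the bipartite dependency graph: sorts and constructors. -/
abbrev DepVertex (S : ADTSig) := Sum (Fin S.numSorts) (Fin S.numCtors)

/-- Edges of the dependency graph `D`: `(σ₀, f)` for every constructor `f`
with result sort `σ₀`, and `(f, σ_j)` for every argument sort `σ_j` of `f`. -/
def DepEdge (S : ADTSig) : DepVertex S → DepVertex S → Prop
  | .inl σ, .inr f => S.ctorRes f = σ
  | .inr f, .inl σ => σ ∈ S.ctorArgs f
  | .inl _, .inl _ => False
  | .inr _, .inr _ => False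

/-- `l` is a (nonempty) path in `D` from `σ` to itself: a closed walk. -/
def IsClosedWalk (S : ADTSig) (σ : Fin S.numSorts) (l : List (DepVertex S)) : Prop :=
  l ≠ [] ∧ List.Chain (DepEdge S) (Sum.inl σ) l ∧ l.getLast? = some (Sum.inl σ)

/-- The vertex list (after the starting vertex `σ¹ = ss 0`) of the cycle
`σ¹ → f¹ → σ² → f² → ⋯ → fⁿ → σ¹` given by `ss`, `fs`. -/
def cycleList (S : ADTSig) (n : ℕ) (ss : Fin (n + 1) → Fin S.numSorts)
    (fs : Fin (n + 1) → Fin S.numCtors) : List (DepVertex S) :=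
  ((List.finRange (n + 1)).map (fun i => [Sum.inr (fs i), Sum.inl (ss (i + 1))])).flatten

def castTerm {S : ADTSig} {σ τ : Fin S.numSorts} (h : σ = τ) (t : S.Term σ) :
    S.Term τ := h ▸ t

theorem castTerm_size {S : ADTSig} {σ τ : Fin S.numSorts} (h : σ = τ) (t : S.Term σ) :
    (castTerm h t).size = t.size := by subst h; rfl

theorem castTerm_head {S : ADTSig} {σ τ : Fin S.numSorts} (h : σ = τ) (t : S.Term σ) :
    (castTerm h t).head = t.head := by subst h; rfl

theorem wrap_size {S : ADTSig} (f : Fin S.numCtors) (σ₁ : Fin S.numSorts)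
    (hargs : S.ctorArgs f = [σ₁]) (t : S.Term σ₁) :
    ∃ t' : S.Term (S.ctorRes f), t'.size = t.size + 1 := by
  have hlen : (S.ctorArgs f).length = 1 := by rw [hargs]; rfl
  have hget : ∀ i : Fin (S.ctorArgs f).length, (S.ctorArgs f).get i = σ₁ := by
    intro i
    have hm : (S.ctorArgs f).get i ∈ S.ctorArgs f := List.get_mem _ i
    generalize (S.ctorArgs f).get i = x at hm ⊢
    rw [hargs] at hm
    simpa using hm
  refine ⟨Term.mk f (fun i => castTerm (hget i).symm t), ?_⟩
  show 1 + ∑ i, (castTerm (hget i).symm t).size = t.size + 1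
  have hs : ∀ i ∈ Finset.univ, (castTerm (hget i).symm t).size = t.size :=
    fun i _ => castTerm_size _ _
  rw [Finset.sum_congr rfl hs, Finset.sum_const]
  simp [hlen, Nat.add_comm]

theorem peel {S : ADTSig} {σ : Fin S.numSorts} (t : S.Term σ) (f : Fin S.numCtors)
    (σ₁ : Fin S.numSorts) (hargs : S.ctorArgs f = [σ₁]) (hhead : t.head = f) :
    ∃ u : S.Term σ₁, t.size = u.size + 1 := by
  cases t with
  | mk g args =>
    have hg : g = f := hhead
    subst hg
    have hlen : (S.ctorArgs g).length = 1 := by rw [hargs]; rfl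
    have hget : ∀ i : Fin (S.ctorArgs g).length, (S.ctorArgs g).get i = σ₁ := by
      intro i
      have hm : (S.ctorArgs g).get i ∈ S.ctorArgs g := List.get_mem _ i
      generalize (S.ctorArgs g).get i = x at hm ⊢
      rw [hargs] at hm
      simpa using hm
    have h0 : (0 : ℕ) < (S.ctorArgs g).length := by omega
    refine ⟨castTerm (hget ⟨0, h0⟩) (args ⟨0, h0⟩), ?_⟩
    show 1 + ∑ i, (args i).size = _
    have hall : ∀ i : Fin (S.ctorArgs g).length, i = ⟨0, h0⟩ := by
      intro i
      apply Fin.ext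
      have := i.isLt
      simp only [hlen] at this
      omega
    have hs : ∀ i ∈ Finset.univ, (args i).size = (args ⟨0, h0⟩).size := by
      intro i _; rw [hall i]
    rw [Finset.sum_congr rfl hs, Finset.sum_const, castTerm_size]
    simp [hlen, Nat.add_comm]

end ADTSig

open Fin.NatCast Fin.CommRing

open ADTSig in
/-- If `C = σ¹ → f¹ → ⋯ → fⁿ → σ¹` is a simple cycle in the dependency graph
of a well-defined ADT in which every sort has at least two constructor terms,
`C` is the only path from `σ¹` to itself, and all constructors on `C` are
unary, then `𝕊_{σ¹} = ℕ·n + ⋃_{i=1}^{n} (𝕊^{fⁱ}_{σⁱ} + (i − 1))` (here the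
cycle has length `n + 1`, and `σ¹ = ss 0`). -/
theorem size_image_of_only_cycle (S : ADTSig) (hS : S.WellDefined)
    (h2 : ∀ σ, ∃ t₁ t₂ : S.Term σ, t₁ ≠ t₂)
    (n : ℕ) (ss : Fin (n + 1) → Fin S.numSorts)
    (fs : Fin (n + 1) → Fin S.numCtors)
    (hcyc : ∀ i, S.ctorRes (fs i) = ss i ∧ ss (i + 1) ∈ S.ctorArgs (fs i))
    (hsimple : Function.Injective ss)
    (honly : ∀ l, IsClosedWalk S (ss 0) l →
       ∃ k, l = (List.replicate k (cycleList S n ss fs)).flatten)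
    (hunary : ∀ i, (S.ctorArgs (fs i)).length = 1) :
    SizeImage S (ss 0) =
      {m | ∃ j : ℕ, ∃ i : Fin (n + 1),
         ∃ s ∈ RelSizeImage S (ss i) (fs i), m = j * (n + 1) + (s + i.val)} := by
  have hargsEq : ∀ i, S.ctorArgs (fs i) = [ss (i + 1)] := by
    intro i
    obtain ⟨a, ha⟩ := List.length_eq_one_iff.mp (hunary i)
    have := (hcyc i).2
    rw [ha] at this ⊢
    simp at this
    rw [this]
  -- decomposition direction
  have decomp : ∀ m : ℕ, ∀ (i : Fin (n + 1)) (t : S.Term (ss i)), t.size = m →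
      ∃ (k : ℕ) (s : ℕ), (∃ u : S.Term (ss (i + (k : Fin (n + 1)))),
          u.head ≠ fs (i + (k : Fin (n + 1))) ∧ u.size = s) ∧ m = k + s := by
    intro m
    induction m using Nat.strong_induction_on with
    | _ m IH =>
      intro i t ht
      by_cases hh : t.head = fs i
      · obtain ⟨u, hu⟩ := peel t (fs i) (ss (i + 1)) (hargsEq i) hh
        have hlt : u.size < m := by omega
        obtain ⟨k, s, ⟨w, hw1, hw2⟩, hks⟩ := IH u.size hlt (i + 1) u rfl
        refine ⟨k + 1, s, ?_, by omega⟩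
        have hidx : i + (((k + 1 : ℕ)) : Fin (n + 1)) = (i + 1) + (k : Fin (n + 1)) := by
          push_cast
          ring
        rw [hidx]
        exact ⟨w, hw1, hw2⟩
      · refine ⟨0, m, ?_, by omega⟩
        have hidx : i + (((0 : ℕ)) : Fin (n + 1)) = i := by simp
        rw [hidx]
        exact ⟨t, hh, ht⟩
  -- wrapping direction
  have wrapMany : ∀ k : ℕ, ∀ (i : Fin (n + 1)) (t : S.Term (ss (i + (k : Fin (n + 1))))),
      ∃ t' : S.Term (ss i), t'.size = t.size + k := by
    intro k
    induction k with
    | zero =>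
      intro i t
      have h : ss (i + ((0 : ℕ) : Fin (n + 1))) = ss i := by norm_num
      exact ⟨castTerm h t, by simp [castTerm_size]⟩
    | succ k IH =>
      intro i t
      have hidx : i + (((k + 1 : ℕ)) : Fin (n + 1)) = (i + 1) + (k : Fin (n + 1)) := by
        push_cast
        ring
      obtain ⟨t₁, ht₁⟩ := IH (i + 1) (castTerm (congrArg ss hidx) t)
      obtain ⟨t₂, ht₂⟩ := wrap_size (fs i) (ss (i + 1)) (hargsEq i) t₁
      refine ⟨castTerm (hcyc i).1 t₂, ?_⟩
      rw [castTerm_size, ht₂, ht₁, castTerm_size]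
      ring
  ext m
  constructor
  · rintro ⟨t, ht⟩
    obtain ⟨k, s, ⟨u, hu1, hu2⟩, hks⟩ := decomp m 0 t ht
    refine ⟨k / (n + 1), 0 + (k : Fin (n + 1)), s, ⟨u, hu1, hu2⟩, ?_⟩
    have hval : ((0 : Fin (n + 1)) + (k : Fin (n + 1))).val = k % (n + 1) := by
      rw [zero_add, Fin.val_natCast]
    rw [hval, hks]
    have h1 : k / (n + 1) * (n + 1) + k % (n + 1) = k := Nat.div_add_mod' k (n + 1)
    obtain ⟨q, hq⟩ : ∃ q, k / (n + 1) * (n + 1) = q := ⟨_, rfl⟩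
    obtain ⟨r, hr⟩ : ∃ r, k % (n + 1) = r := ⟨_, rfl⟩
    rw [hq, hr] at h1 ⊢
    omega
  · rintro ⟨j, i, s, ⟨u, hu1, hu2⟩, hm⟩
    have hK : ((j * (n + 1) + i.val : ℕ) : Fin (n + 1)) = i := by
      apply Fin.ext
      rw [Fin.val_natCast, Nat.add_comm, Nat.add_mul_mod_self_right,
        Nat.mod_eq_of_lt i.isLt]
    have h : ss i = ss ((0 : Fin (n + 1)) + ((j * (n + 1) + i.val : ℕ) : Fin (n + 1))) := by
      rw [zero_add, hK]
    obtain ⟨t', ht'⟩ := wrapMany (j * (n + 1) + i.val) 0 (castTerm h u)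
    refine ⟨t', ?_⟩
    rw [ht', castTerm_size, hu2, hm]
    ring
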